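/- Let f(x) = Σ_{i=0}^{n} a_i x^i and g(x) = Σ_{j=0}^{m} b_j x^{kj} be integer polynomials, and suppose s is a positive integer with s·k > n. Then H(f·g) ≤ s·H(f)·H(g). -/

import Mathlib

open Polynomial

noncomputable def Height (f : Polynomial ℤ) : ℕ :=
  f.support.sup fun i => (f.coeff i).natAbs

noncomputable def Tsum (f : Polynomial ℤ) : ℕ :=
  ∑ i ∈ f.support, (f.coeff i).natAbs

noncomputable def B (n : ℕ) : ℕ :=
  sSup {h : ℕ | ∃ f : Polynomial ℤ, f ∣ X ^ n - 1 ∧ Height f = h}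

lemma natAbs_coeff_le_height (f : Polynomial ℤ) (i : ℕ) :
    (f.coeff i).natAbs ≤ Height f := by
  by_cases h : f.coeff i = 0
  · simp [h]
  · exact Finset.le_sup (f := fun i => (f.coeff i).natAbs)
      (Polynomial.mem_support_iff.2 h)

lemma natAbs_sum_le {α : Type*} (S : Finset α) (v : α → ℤ) :
    (∑ p ∈ S, v p).natAbs ≤ ∑ p ∈ S, (v p).natAbs := by
  classical
  induction S using Finset.induction with
  | empty => simp
  | insert x s h ih =>
    rw [Finset.sum_insert h, Finset.sum_insert h]
    exact le_trans (Int.natAbs_add_le _ _) (by omega)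

theorem stmt_5 (n m k s : ℕ) (a b : ℕ → ℤ) (hs : 0 < s) (hsk : n < s * k)
    (f g : Polynomial ℤ)
    (hf : f = ∑ i ∈ Finset.range (n + 1), C (a i) * X ^ i)
    (hg : g = ∑ j ∈ Finset.range (m + 1), C (b j) * X ^ (k * j)) :
    Height (f * g) ≤ s * Height f * Height g := by
  have hk : 0 < k := by
    rcases Nat.eq_zero_or_pos k with h | h
    · subst h; simp at hsk
    · exact h
  have hfc : ∀ i, n < i → f.coeff i = 0 := by
    intro i hi
    subst hf
    simp only [Polynomial.finset_sum_coeff, Polynomial.coeff_C_mul,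
      Polynomial.coeff_X_pow]
    apply Finset.sum_eq_zero
    intro j hj
    simp only [Finset.mem_range] at hj
    rw [if_neg (by omega), mul_zero]
  have hgc : ∀ j, ¬ (k ∣ j) → g.coeff j = 0 := by
    intro j hj
    subst hg
    simp only [Polynomial.finset_sum_coeff, Polynomial.coeff_C_mul,
      Polynomial.coeff_X_pow]
    apply Finset.sum_eq_zero
    intro j' _
    rw [if_neg (fun h => hj ⟨j', h⟩), mul_zero]
  apply Finset.sup_le
  intro t _
  rw [Polynomial.coeff_mul]
  set S := (Finset.HasAntidiagonal.antidiagonal t).filter (fun p => p.1 ≤ n ∧ k ∣ p.2) with hS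
  have hmem : ∀ p ∈ S, p.1 + p.2 = t ∧ p.1 ≤ n ∧ k ∣ p.2 := by
    intro p hp
    simp only [hS, Finset.mem_filter, Finset.HasAntidiagonal.mem_antidiagonal] at hp
    tauto
  have hsum : ∑ p ∈ S, f.coeff p.1 * g.coeff p.2
      = ∑ p ∈ Finset.HasAntidiagonal.antidiagonal t, f.coeff p.1 * g.coeff p.2 := by
    apply Finset.sum_filter_of_ne
    intro p _ hne
    constructor
    · by_contra h
      exact hne (by rw [hfc p.1 (by omega), zero_mul])
    · by_contra h
      exact hne (by rw [hgc p.2 h, mul_zero])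
  rw [← hsum]
  have hcard : S.card ≤ s := by
    rcases S.eq_empty_or_nonempty with h | h
    · simp [h]
    · obtain ⟨p0, hp0, hmin⟩ := S.exists_min_image (fun p => p.2 / k) h
      have hq0 : p0.2 = k * (p0.2 / k) := (Nat.mul_div_cancel' (hmem p0 hp0).2.2).symm
      obtain ⟨h1, h2, _⟩ := hmem p0 hp0
      have hmaps : ∀ p ∈ S, (fun p : ℕ × ℕ => p.2 / k - p0.2 / k) p ∈ Finset.range s := by
        intro p hp
        obtain ⟨hpt, hpn, hpd⟩ := hmem p hp
        have hq : p.2 = k * (p.2 / k) := (Nat.mul_div_cancel' hpd).symm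
        have hle : p0.2 / k ≤ p.2 / k := hmin p hp
        have h3 : k * (p.2 / k) ≤ t := by omega
        have h4 : t ≤ n + k * (p0.2 / k) := by omega
        have h5 : k * (p.2 / k) < k * (s + p0.2 / k) := by
          have : k * (s + p0.2 / k) = s * k + k * (p0.2 / k) := by ring
          omega
        have h6 : p.2 / k < s + p0.2 / k := Nat.lt_of_mul_lt_mul_left h5
        simp only [Finset.mem_range]
        omega
      have hinj : Set.InjOn (fun p : ℕ × ℕ => p.2 / k - p0.2 / k) S := by
        intro p hp p' hp' heq
        rw [Finset.mem_coe] at hp hp'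
        obtain ⟨hpt, _, hpd⟩ := hmem p hp
        obtain ⟨hpt', _, hpd'⟩ := hmem p' hp'
        have hq : p.2 = k * (p.2 / k) := (Nat.mul_div_cancel' hpd).symm
        have hq' : p'.2 = k * (p'.2 / k) := (Nat.mul_div_cancel' hpd').symm
        have hle : p0.2 / k ≤ p.2 / k := hmin p hp
        have hle' : p0.2 / k ≤ p'.2 / k := hmin p' hp'
        have heq' : p.2 / k - p0.2 / k = p'.2 / k - p0.2 / k := heq
        have hqq : p.2 / k = p'.2 / k := by omega
        have h2' : p.2 = p'.2 := by rw [hq, hq', hqq]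
        have h1' : p.1 = p'.1 := by omega
        exact Prod.ext h1' h2'
      simpa using Finset.card_le_card_of_injOn _ hmaps hinj
  calc (∑ p ∈ S, f.coeff p.1 * g.coeff p.2).natAbs
      ≤ ∑ p ∈ S, (f.coeff p.1 * g.coeff p.2).natAbs := natAbs_sum_le S _
    _ ≤ ∑ _p ∈ S, Height f * Height g := by
        apply Finset.sum_le_sum
        intro p _
        rw [Int.natAbs_mul]
        exact Nat.mul_le_mul (natAbs_coeff_le_height f p.1)
          (natAbs_coeff_le_height g p.2)
    _ = S.card * (Height f * Height g) := by rw [Finset.sum_const, smul_eq_mul]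
    _ ≤ s * (Height f * Height g) := Nat.mul_le_mul_right _ hcard
    _ = s * Height f * Height g := by ring
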